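/- Let L be odd with L ≥ 3. Consider the diagonal translation-invariant Hamiltonian H = ∑_{i=1}^{L} H_{i,i+1} on (ℂ³)^{⊗L} (indices mod L), where H_{i,i+1} = id − P_{i,i+1} + (1/(2L))|2⟩⟨2|_i and P = |01⟩⟨01| + |10⟩⟨10| + |02⟩⟨02| + |21⟩⟨21|. Then every computational basis state |i₁,…,i_L⟩ ∈ {0,1,2}^L has ⟨i₁…i_L| H |i₁…i_L⟩ ≥ 1/(2L), with equality exactly for the L cyclic shifts of |2101010…10⟩. -/
import Mathlib


/-- Diagonal energy `⟨i|H|i⟩` of a computational basis string on the cycle of length `L`: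
`+1` for each cyclically adjacent pair not in `{01, 10, 02, 21}` (from `id − P_{k,k+1}`),
plus `1/(2L)` for each occurrence of the symbol `2` (from `(1/(2L))|2⟩⟨2|_k`). -/
noncomputable def cycleEnergy (L : ℕ) (i : Fin L → Fin 3) : ℝ :=
  ∑ k : Fin L,
    ((if (i k, i ⟨((k : ℕ) + 1) % L, Nat.mod_lt _ k.pos⟩) ∈
        ({((0 : Fin 3), (1 : Fin 3)), (1, 0), (0, 2), (2, 1)} : Finset (Fin 3 × Fin 3))
      then (0 : ℝ) else 1)
    + (1 / (2 * (L : ℝ))) * (if i k = 2 then 1 else 0))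

/-- The reference string `2101010…10` of length `L`. -/
def groundString (L : ℕ) : Fin L → Fin 3 :=
  fun j => if (j : ℕ) = 0 then 2 else if (j : ℕ) % 2 = 1 then 1 else 0


def GS.goodSet : Finset (Fin 3 × Fin 3) :=
  {((0 : Fin 3), (1 : Fin 3)), (1, 0), (0, 2), (2, 1)}

lemma GS.good_cases : ∀ a b : Fin 3, (a, b) ∈ GS.goodSet →
    (a = 0 ∧ b = 1) ∨ (a = 1 ∧ b = 0) ∨ (a = 0 ∧ b = 2) ∨ (a = 2 ∧ b = 1) := by
  decide

def GS.nxt {L : ℕ} (k : Fin L) : Fin L := ⟨((k : ℕ) + 1) % L, Nat.mod_lt _ k.pos⟩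

/-- an odd cycle with all pairs good must contain a `2` -/
lemma GS.parity (L : ℕ) (hL : 3 ≤ L) (hodd : Odd L) (i : Fin L → Fin 3)
    (hg : ∀ k : Fin L, (i k, i (GS.nxt k)) ∈ GS.goodSet)
    (h2 : ∀ k : Fin L, i k ≠ 2) : False := by
  have hL0 : 0 < L := by omega
  set v : ℕ → Fin 3 := fun n => i ⟨n % L, Nat.mod_lt _ hL0⟩ with hv
  have hstep : ∀ n : ℕ, (v n = 0 ∧ v (n + 1) = 1) ∨ (v n = 1 ∧ v (n + 1) = 0) := by
    intro n
    have hmod : (n % L + 1) % L = (n + 1) % L := (Nat.mod_modEq n L).add_right 1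
    have hk := hg ⟨n % L, Nat.mod_lt _ hL0⟩
    have hnxt : GS.nxt (⟨n % L, Nat.mod_lt _ hL0⟩ : Fin L) = ⟨(n + 1) % L, Nat.mod_lt _ hL0⟩ := by
      simp [GS.nxt, hmod]
    rw [hnxt] at hk
    rcases GS.good_cases _ _ hk with ⟨ha, hb⟩ | ⟨ha, hb⟩ | ⟨ha, hb⟩ | ⟨ha, hb⟩
    · exact Or.inl ⟨ha, hb⟩
    · exact Or.inr ⟨ha, hb⟩
    · exact absurd hb (h2 _)
    · exact absurd ha (h2 _)
  have key : ∀ n : ℕ, v n = if n % 2 = 0 then v 0 else v 1 := by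
    intro n
    induction n with
    | zero => simp
    | succ n ih =>
      rcases Nat.even_or_odd n with he | ho
      · have h1 : n % 2 = 0 := Nat.even_iff.mp he
        have h2' : (n + 1) % 2 = 1 := by omega
        rw [h2']; simp only [one_ne_zero, if_false]
        rw [h1] at ih; simp only [if_pos rfl] at ih
        rcases hstep 0 with ⟨h00, h01⟩ | ⟨h00, h01⟩ <;>
          rcases hstep n with ⟨hn0, hn1⟩ | ⟨hn0, hn1⟩ <;> simp_all
      · have h1 : n % 2 = 1 := Nat.odd_iff.mp ho
        have h2' : (n + 1) % 2 = 0 := by omega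
        rw [h2']; simp only [if_pos rfl]
        rw [h1] at ih; simp only [one_ne_zero, if_false] at ih
        rcases hstep 0 with ⟨h00, h01⟩ | ⟨h00, h01⟩ <;>
          rcases hstep n with ⟨hn0, hn1⟩ | ⟨hn0, hn1⟩ <;> simp_all
  have hvL : v L = v 0 := by
    have : L % L = 0 % L := by simp
    simp only [hv, this]
  have hL2 : L % 2 = 1 := Nat.odd_iff.mp hodd
  have := key L
  rw [hL2] at this; simp only [one_ne_zero, if_false] at this
  rw [hvL] at this
  rcases hstep 0 with ⟨h00, h01⟩ | ⟨h00, h01⟩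
  · have e1 : v 1 = 1 := h01
    have : (0 : Fin 3) = 1 := by rw [← h00, this, e1]
    exact absurd this (by decide)
  · have e1 : v 1 = 0 := h01
    have : (1 : Fin 3) = 0 := by rw [← h00, this, e1]
    exact absurd this (by decide)

lemma GS.chain (L : ℕ) (hL0 : 0 < L) (i : Fin L → Fin 3)
    (hg : ∀ k : Fin L, (i k, i (GS.nxt k)) ∈ GS.goodSet)
    (p : Fin L) (hp : ∀ k : Fin L, i k = 2 ↔ k = p) :
    ∀ j : ℕ, j < L → i ⟨((p : ℕ) + j) % L, Nat.mod_lt _ hL0⟩ =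
      (if j = 0 then 2 else if j % 2 = 1 then 1 else 0) := by
  intro j
  induction j with
  | zero =>
    intro _
    have : ((p : ℕ) + 0) % L = (p : ℕ) := by
      rw [Nat.add_zero, Nat.mod_eq_of_lt p.isLt]
    simp only [this, if_pos rfl]
    have : (⟨(p : ℕ), p.isLt⟩ : Fin L) = p := rfl
    rw [this]
    exact (hp p).mpr rfl
  | succ j ih =>
    intro hj1
    have hj : j < L := by omega
    have ha := ih hj
    have hbmod : (((p : ℕ) + j) % L + 1) % L = ((p : ℕ) + (j + 1)) % L := by
      have h := (Nat.mod_modEq ((p : ℕ) + j) L).add_right 1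
      simpa [Nat.add_assoc] using h
    have hk := hg ⟨((p : ℕ) + j) % L, Nat.mod_lt _ hL0⟩
    have hnxt : GS.nxt (⟨((p : ℕ) + j) % L, Nat.mod_lt _ hL0⟩ : Fin L)
        = ⟨((p : ℕ) + (j + 1)) % L, Nat.mod_lt _ hL0⟩ := by
      simp only [GS.nxt]
      exact Fin.ext hbmod
    rw [hnxt] at hk
    have hbne : (⟨((p : ℕ) + (j + 1)) % L, Nat.mod_lt _ hL0⟩ : Fin L) ≠ p := by
      intro h
      have hval : ((p : ℕ) + (j + 1)) % L = (p : ℕ) := congrArg Fin.val h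
      have h0 : ((p : ℕ) + (j + 1)) % L = ((p : ℕ) + 0) % L := by
        rw [hval, Nat.add_zero, Nat.mod_eq_of_lt p.isLt]
      have h1 : (j + 1) % L = 0 % L := Nat.ModEq.add_left_cancel' (p : ℕ) h0
      rw [Nat.zero_mod, Nat.mod_eq_of_lt hj1] at h1
      omega
    have hb2 : i ⟨((p : ℕ) + (j + 1)) % L, Nat.mod_lt _ hL0⟩ ≠ 2 :=
      fun h => hbne ((hp _).mp h)
    by_cases hj0 : j = 0
    · subst hj0
      simp only [if_pos rfl] at ha
      rcases GS.good_cases _ _ hk with ⟨h1, h2⟩ | ⟨h1, h2⟩ | ⟨h1, h2⟩ | ⟨h1, h2⟩ <;>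
        rw [ha] at h1
      · exact absurd h1 (by decide)
      · exact absurd h1 (by decide)
      · exact absurd h1 (by decide)
      · rw [h2]; norm_num
    · rcases Nat.even_or_odd j with he | ho
      · have hj2 : j % 2 = 0 := Nat.even_iff.mp he
        have hj12 : (j + 1) % 2 = 1 := by omega
        rw [if_neg hj0, hj2] at ha
        norm_num at ha
        rcases GS.good_cases _ _ hk with ⟨h1, h2⟩ | ⟨h1, h2⟩ | ⟨h1, h2⟩ | ⟨h1, h2⟩ <;>
          rw [ha] at h1
        · rw [h2]; simp [hj12]
        · exact absurd h1 (by decide)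
        · exact absurd h2 hb2
        · exact absurd h1 (by decide)
      · have hj2 : j % 2 = 1 := Nat.odd_iff.mp ho
        have hj12 : (j + 1) % 2 = 0 := by omega
        rw [if_neg hj0, hj2] at ha
        norm_num at ha
        rcases GS.good_cases _ _ hk with ⟨h1, h2⟩ | ⟨h1, h2⟩ | ⟨h1, h2⟩ | ⟨h1, h2⟩ <;>
          rw [ha] at h1
        · exact absurd h1 (by decide)
        · rw [h2]; simp [hj12]
        · exact absurd h1 (by decide)
        · exact absurd h1 (by decide)

lemma GS.zero_iff (L : ℕ) (hL0 : 0 < L) (k m : ℕ) (hk : k < L) (hm : m < L) :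
    (k + m) % L = 0 ↔ k = (L - m) % L := by
  constructor
  · intro h
    rcases Nat.dvd_of_mod_eq_zero h with ⟨c, hc⟩
    have hc2 : c < 2 := by
      by_contra hc2
      have : L * 2 ≤ L * c := Nat.mul_le_mul_left L (by omega)
      omega
    interval_cases c
    · have : k = 0 ∧ m = 0 := by omega
      rw [this.1, this.2, Nat.sub_zero, Nat.mod_self]
    · have hm1 : 1 ≤ m := by omega
      rw [Nat.mod_eq_of_lt (by omega : L - m < L)]
      omega
  · intro h
    rcases Nat.eq_zero_or_pos m with hm0 | hm1
    · subst hm0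
      rw [Nat.sub_zero, Nat.mod_self] at h
      subst h
      simp
    · rw [Nat.mod_eq_of_lt (by omega : L - m < L)] at h
      subst h
      rw [show L - m + m = L by omega, Nat.mod_self]

lemma GS.ground_val (L : ℕ) (j : ℕ) (hj : j < L) :
    groundString L ⟨j, hj⟩ = if j = 0 then 2 else if j % 2 = 1 then 1 else 0 := rfl

lemma GS.shift_index (L : ℕ) (hL0 : 0 < L) (k m : Fin L) :
    ((((k : ℕ) + 1) % L) + (m : ℕ)) % L = (((k : ℕ) + (m : ℕ)) % L + 1) % L := by
  have h1 : (((k : ℕ) + 1) % L) + (m : ℕ) ≡ (k : ℕ) + 1 + (m : ℕ) [MOD L] :=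
    Nat.ModEq.add_right _ (Nat.mod_modEq _ L)
  have h2 : ((k : ℕ) + (m : ℕ)) % L + 1 ≡ (k : ℕ) + (m : ℕ) + 1 [MOD L] :=
    Nat.ModEq.add_right _ (Nat.mod_modEq _ L)
  have h3 : (k : ℕ) + 1 + (m : ℕ) = (k : ℕ) + (m : ℕ) + 1 := by omega
  exact h1.trans (h3 ▸ h2.symm)

lemma GS.shift_good (L : ℕ) (hL : 3 ≤ L) (hodd : Odd L) (m : Fin L) (i : Fin L → Fin 3)
    (hi : ∀ k : Fin L, i k = groundString L ⟨((k : ℕ) + (m : ℕ)) % L, Nat.mod_lt _ k.pos⟩) :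
    ∀ k : Fin L, (i k, i (GS.nxt k)) ∈ GS.goodSet := by
  intro k
  have hL0 : 0 < L := by omega
  set j : ℕ := ((k : ℕ) + (m : ℕ)) % L with hjdef
  have hjL : j < L := Nat.mod_lt _ hL0
  have hk1 : i k = groundString L ⟨j, hjL⟩ := hi k
  have hk2 : i (GS.nxt k) = groundString L ⟨(j + 1) % L, Nat.mod_lt _ hL0⟩ := by
    have := hi (GS.nxt k)
    rw [this]
    congr 1
    exact Fin.ext (GS.shift_index L hL0 k m)
  rw [hk1, hk2, GS.ground_val, GS.ground_val]
  have hL2 : L % 2 = 1 := Nat.odd_iff.mp hodd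
  by_cases hj0 : j = 0
  · rw [if_pos hj0, hj0, Nat.mod_eq_of_lt (by omega : (0:ℕ) + 1 < L)]
    norm_num [GS.goodSet]
  · by_cases hjtop : j = L - 1
    · have h1 : j % 2 = 0 := by omega
      have h2 : (j + 1) % L = 0 := by
        rw [hjtop, show L - 1 + 1 = L by omega, Nat.mod_self]
      rw [if_neg hj0, h1, h2, if_pos rfl]
      norm_num [GS.goodSet]
    · have hj1L : j + 1 < L := by omega
      rw [if_neg hj0, Nat.mod_eq_of_lt hj1L, if_neg (by omega : ¬ j + 1 = 0)]
      rcases Nat.even_or_odd j with he | ho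
      · have e1 : j % 2 = 0 := Nat.even_iff.mp he
        have e2 : (j + 1) % 2 = 1 := by omega
        rw [e1, e2]
        norm_num [GS.goodSet]
      · have e1 : j % 2 = 1 := Nat.odd_iff.mp ho
        have e2 : (j + 1) % 2 = 0 := by omega
        rw [e1, e2]
        norm_num [GS.goodSet]

lemma GS.shift_two (L : ℕ) (hL : 3 ≤ L) (m : Fin L) (i : Fin L → Fin 3)
    (hi : ∀ k : Fin L, i k = groundString L ⟨((k : ℕ) + (m : ℕ)) % L, Nat.mod_lt _ k.pos⟩) :
    ∀ k : Fin L, i k = 2 ↔ k = ⟨(L - (m : ℕ)) % L, Nat.mod_lt _ (by omega)⟩ := by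
  intro k
  have hL0 : 0 < L := by omega
  rw [hi k, GS.ground_val]
  constructor
  · intro h
    have hj0 : ((k : ℕ) + (m : ℕ)) % L = 0 := by
      by_contra hne
      rw [if_neg hne] at h
      split at h <;> exact absurd h (by decide)
    exact Fin.ext ((GS.zero_iff L hL0 _ _ k.isLt m.isLt).mp hj0)
  · intro h
    have : (k : ℕ) = (L - (m : ℕ)) % L := congrArg Fin.val h
    rw [if_pos ((GS.zero_iff L hL0 _ _ k.isLt m.isLt).mpr this)]

def GS.Bn (L : ℕ) (i : Fin L → Fin 3) : ℕ :=
  (Finset.univ.filter (fun k => (i k, i (GS.nxt k)) ∉ GS.goodSet)).card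

def GS.Tn (L : ℕ) (i : Fin L → Fin 3) : ℕ :=
  (Finset.univ.filter (fun k => i k = 2)).card

lemma GS.energy_eq (L : ℕ) (i : Fin L → Fin 3) :
    cycleEnergy L i = (GS.Bn L i : ℝ) + (1 / (2 * (L : ℝ))) * (GS.Tn L i : ℝ) := by
  unfold cycleEnergy GS.Bn GS.Tn
  unfold GS.goodSet GS.nxt
  rw [Finset.sum_add_distrib]
  congr 1
  · rw [← Finset.sum_boole]
    refine Finset.sum_congr rfl fun k _ => ?_
    by_cases h : (i k, i ⟨((k : ℕ) + 1) % L, Nat.mod_lt _ k.pos⟩) ∈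
        ({((0 : Fin 3), (1 : Fin 3)), (1, 0), (0, 2), (2, 1)} : Finset (Fin 3 × Fin 3))
    · rw [if_pos h, if_neg (not_not_intro h)]
    · rw [if_neg h, if_pos h]
  · rw [← Finset.mul_sum, ← Finset.sum_boole]

theorem ground_state_energy (L : ℕ) (hL : 3 ≤ L) (hodd : Odd L) (i : Fin L → Fin 3) :
    1 / (2 * (L : ℝ)) ≤ cycleEnergy L i ∧
    (cycleEnergy L i = 1 / (2 * (L : ℝ)) ↔
      ∃ m : Fin L, ∀ k : Fin L,
        i k = groundString L ⟨((k : ℕ) + (m : ℕ)) % L, Nat.mod_lt _ k.pos⟩) := by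
  have hL0 : 0 < L := by omega
  have hLR : (0 : ℝ) < (L : ℝ) := by exact_mod_cast hL0
  have h2L : (0 : ℝ) < 2 * (L : ℝ) := by linarith
  have hLR3 : (3 : ℝ) ≤ (L : ℝ) := by exact_mod_cast hL
  have hEq := GS.energy_eq L i
  have hBgood : GS.Bn L i = 0 → ∀ k : Fin L, (i k, i (GS.nxt k)) ∈ GS.goodSet := by
    intro h k
    by_contra hbad
    have hmem : k ∈ Finset.univ.filter (fun k => (i k, i (GS.nxt k)) ∉ GS.goodSet) :=
      Finset.mem_filter.mpr ⟨Finset.mem_univ _, hbad⟩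
    rw [Finset.card_eq_zero.mp h] at hmem
    exact absurd hmem (Finset.notMem_empty k)
  have hTno2 : GS.Tn L i = 0 → ∀ k : Fin L, i k ≠ 2 := by
    intro h k hk
    have hmem : k ∈ Finset.univ.filter (fun k => i k = 2) :=
      Finset.mem_filter.mpr ⟨Finset.mem_univ _, hk⟩
    rw [Finset.card_eq_zero.mp h] at hmem
    exact absurd hmem (Finset.notMem_empty k)
  -- lower bound
  have hlow : 1 / (2 * (L : ℝ)) ≤ cycleEnergy L i := by
    rcases Nat.eq_zero_or_pos (GS.Bn L i) with hB | hB
    · have hT : 1 ≤ GS.Tn L i := by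
        rcases Nat.eq_zero_or_pos (GS.Tn L i) with hT | hT
        · exact absurd (GS.parity L hL hodd i (hBgood hB) (hTno2 hT)) not_false
        · exact hT
      rw [hEq, hB]
      have : (1 : ℝ) ≤ (GS.Tn L i : ℝ) := by exact_mod_cast hT
      have h1 : 1 / (2 * (L : ℝ)) * 1 ≤ 1 / (2 * (L : ℝ)) * (GS.Tn L i : ℝ) := by
        apply mul_le_mul_of_nonneg_left this
        positivity
      simpa using h1
    · rw [hEq]
      have h1 : (1 : ℝ) ≤ (GS.Bn L i : ℝ) := by exact_mod_cast hB
      have h2 : (0 : ℝ) ≤ 1 / (2 * (L : ℝ)) * (GS.Tn L i : ℝ) := by positivity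
      have h3 : 1 / (2 * (L : ℝ)) ≤ 1 := by
        rw [div_le_one h2L]; linarith
      linarith
  refine ⟨hlow, ?_, ?_⟩
  · -- equality → shift
    intro heq
    rw [hEq] at heq
    have hmul : 2 * (L : ℝ) * ((GS.Bn L i : ℝ) + 1 / (2 * (L : ℝ)) * (GS.Tn L i : ℝ))
        = 2 * (L : ℝ) * (1 / (2 * (L : ℝ))) := by rw [heq]
    have hcast : 2 * (L : ℝ) * (GS.Bn L i : ℝ) + (GS.Tn L i : ℝ) = 1 := by
      field_simp at hmul
      linarith
    have hnat : 2 * L * GS.Bn L i + GS.Tn L i = 1 := by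
      have : ((2 * L * GS.Bn L i + GS.Tn L i : ℕ) : ℝ) = ((1 : ℕ) : ℝ) := by
        push_cast
        linarith
      exact_mod_cast this
    have hB : GS.Bn L i = 0 := by
      rcases Nat.eq_zero_or_pos (GS.Bn L i) with h | h
      · exact h
      · exfalso
        have h6 : 2 * L ≤ 2 * L * GS.Bn L i := by
          calc 2 * L = 2 * L * 1 := (mul_one _).symm
            _ ≤ 2 * L * GS.Bn L i := Nat.mul_le_mul_left _ h
        have h7 : 2 * L ≤ 1 :=
          le_trans h6 (le_trans (Nat.le_add_right _ _) (le_of_eq hnat))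
        omega
    have hT : GS.Tn L i = 1 := by rw [hB] at hnat; simpa using hnat
    have hgood := hBgood hB
    obtain ⟨p, hpset⟩ := Finset.card_eq_one.mp hT
    have hp : ∀ k : Fin L, i k = 2 ↔ k = p := by
      intro k
      constructor
      · intro h
        have : k ∈ Finset.univ.filter (fun k => i k = 2) :=
          Finset.mem_filter.mpr ⟨Finset.mem_univ _, h⟩
        rw [hpset] at this
        exact Finset.mem_singleton.mp this
      · intro h
        subst h
        have : k ∈ ({k} : Finset (Fin L)) := Finset.mem_singleton_self k
        rw [← hpset] at this
        exact (Finset.mem_filter.mp this).2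
    refine ⟨⟨(L - (p : ℕ)) % L, Nat.mod_lt _ hL0⟩, fun k => ?_⟩
    set j : ℕ := ((k : ℕ) + (L - (p : ℕ)) % L) % L with hjdef
    have hjL : j < L := Nat.mod_lt _ hL0
    have hin : ((p : ℕ) + j) % L = (k : ℕ) := by
      have h1 : j ≡ (k : ℕ) + (L - (p : ℕ)) [MOD L] :=
        (Nat.mod_modEq _ L).trans (Nat.ModEq.add_left _ (Nat.mod_modEq _ L))
      have h2 : (p : ℕ) + j ≡ (p : ℕ) + ((k : ℕ) + (L - (p : ℕ))) [MOD L] :=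
        Nat.ModEq.add_left _ h1
      have h3 : (p : ℕ) + ((k : ℕ) + (L - (p : ℕ))) = (k : ℕ) + L := by
        have := p.isLt; omega
      have h4 : ((p : ℕ) + j) % L = ((k : ℕ) + L) % L := h3 ▸ h2
      rw [h4, Nat.add_mod_right, Nat.mod_eq_of_lt k.isLt]
    have hkeq : (⟨((p : ℕ) + j) % L, Nat.mod_lt _ hL0⟩ : Fin L) = k := Fin.ext hin
    have hchain := GS.chain L hL0 i hgood p hp j hjL
    rw [hkeq] at hchain
    rw [hchain, GS.ground_val]
  · -- shift → equality
    rintro ⟨m, hm⟩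
    have hB : GS.Bn L i = 0 := by
      rw [GS.Bn, Finset.card_eq_zero, Finset.filter_eq_empty_iff]
      intro k _
      exact not_not_intro (GS.shift_good L hL hodd m i hm k)
    have hT : GS.Tn L i = 1 := by
      rw [GS.Tn, Finset.card_eq_one]
      refine ⟨⟨(L - (m : ℕ)) % L, Nat.mod_lt _ hL0⟩, ?_⟩
      ext k
      simp only [Finset.mem_filter, Finset.mem_univ, true_and, Finset.mem_singleton]
      exact GS.shift_two L hL m i hm k
    rw [hEq, hB, hT]
    norm_num
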